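/- Let A be an associative Z/2-algebra, f = f^3+f^4+... a Hochschild twisting cochain (δf = f ⌣₁ f). Suppose the algebra map μ into Hochschild cochains of R = C^*(B,H) is a chain map commuting with ⌣₁ up to the arity-wise identities induced by cup products. Then for any h_0 ∈ R, the curvature element κ(h_0) = δh_0 + h_0·h_0 + Σ_k (μf^k)(h_0,...,h_0) satisfies the Bianchi-type identity: δκ(h_0) = h_0·κ(h_0) + κ(h_0)·h_0 + Σ_k Σ_j (μf^k)(h_0,...,κ(h_0) (in slot j),...,h_0). -/

import Mathlib

/-!
Hochschild cochains of an associative algebra `A` over `ℤ/2`, modeled as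
functions on sequences `(ℕ → A) → A`; a cochain of arity `i` is such a
function that depends only on the first `i` entries and is additive
(= `ℤ/2`-linear) in each of them (predicate `Hoch.IsCochain`).
-/

namespace Hoch

variable {A : Type*} [Ring A]

/-- Shift a sequence of arguments by `i`. -/
def shift (a : ℕ → A) (i : ℕ) : ℕ → A := fun n => a (n + i)

/-- The sequence obtained from `a` by multiplying the `k`-th and `(k+1)`-st entries. -/
def merge (a : ℕ → A) (k : ℕ) : ℕ → A :=
  fun n => if n < k then a n else if n = k then a k * a (k + 1) else a (n + 1)

/-- The Hochschild coboundary of an arity-`i` cochain: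
`(δf)(a₀,…,a_i) = a₀·f(a₁,…,a_i) + Σ_k f(…,a_k·a_{k+1},…) + f(a₀,…,a_{i-1})·a_i`. -/
def δH (i : ℕ) (f : (ℕ → A) → A) : (ℕ → A) → A :=
  fun a => a 0 * f (shift a 1) + (∑ k ∈ Finset.range i, f (merge a k)) + f a * a i

/-- Cup product of an arity-`i` cochain `f` with a cochain `g`:
`(f ⌣ g)(a₀,…) = f(a₀,…,a_{i-1}) · g(a_i,…)`. -/
def cup (i : ℕ) (f g : (ℕ → A) → A) : (ℕ → A) → A :=
  fun a => f a * g (shift a i)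

/-- Insert the value of an arity-`j` cochain `g` into position `k` of the argument
sequence `a`. -/
def ins (a : ℕ → A) (k j : ℕ) (g : (ℕ → A) → A) : ℕ → A :=
  fun n => if n < k then a n else if n = k then g (shift a k) else a (n + j - 1)

/-- The `⌣₁` (insertion) product of an arity-`i` cochain `f` with an arity-`j`
cochain `g`:  `(f ⌣₁ g)(a₁,…,a_{i+j-1}) = Σ_k f(a₁,…,a_k, g(…), …)`. -/
def cup1 (i j : ℕ) (f g : (ℕ → A) → A) : (ℕ → A) → A :=
  fun a => ∑ k ∈ Finset.range i, f (ins a k j g)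

/-- `f` is an arity-`i` Hochschild cochain: it depends only on its first `i`
arguments and is additive (`ℤ/2`-multilinear) in each of them. -/
def IsCochain (i : ℕ) (f : (ℕ → A) → A) : Prop :=
  (∀ a b : ℕ → A, (∀ n < i, a n = b n) → f a = f b) ∧
  (∀ k < i, ∀ (a : ℕ → A) (x y : A),
    f (Function.update a k (x + y)) = f (Function.update a k x) + f (Function.update a k y))

end Hoch

/-- Bianchi-type identity for the curvature of the deformed
Maurer–Cartan operator.  `R` is a DG algebra over `ZMod 2` with differential
`d` (the cup-product algebra `C^*(B,H)`), and `M k` is the `k`-ary operation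
`μf^k` induced by a Hochschild twisting cochain `f = f³ + f⁴ + ⋯` (so the
Hochschild coboundary of `M k`, formed with the multiplication of `R`, equals
the image of `δf = f ⌣₁ f`, and `d` acts on `M k` by the Leibniz rule).
Then the curvature `κ(h₀) = δh₀ + h₀·h₀ + Σ_k (μf^k)(h₀,…,h₀)` satisfies
`δκ = h₀·κ + κ·h₀ + Σ_k Σ_j (μf^k)(h₀,…,κ,…,h₀)`. -/
theorem curvature_bianchi_identity
    {R : Type*} [Ring R] [Algebra (ZMod 2) R]
    (d : R → R)
    (hadd : ∀ x y, d (x + y) = d x + d y)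
    (hleib : ∀ x y, d (x * y) = d x * y + x * d y)
    (hdd : ∀ x, d (d x) = 0)
    (N : ℕ) (M : ℕ → (ℕ → R) → R)
    (hM : ∀ k, Hoch.IsCochain k (M k))
    (hM3 : ∀ k < 3, M k = 0)
    (hMN : ∀ k, N ≤ k → M k = 0)
    (hchain : ∀ k, Hoch.δH k (M k)
        = ∑ p ∈ Finset.HasAntidiagonal.antidiagonal (k + 2), Hoch.cup1 p.1 p.2 (M p.1) (M p.2))
    (hLeib : ∀ (k : ℕ) (r : ℕ → R),
        d (M k r) = ∑ j ∈ Finset.range k, M k (Function.update r j (d (r j))))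
    (h0 : R) :
    d (d h0 + h0 * h0 + ∑ k ∈ Finset.range N, M k (fun _ => h0))
      = h0 * (d h0 + h0 * h0 + ∑ k ∈ Finset.range N, M k (fun _ => h0))
        + (d h0 + h0 * h0 + ∑ k ∈ Finset.range N, M k (fun _ => h0)) * h0
        + ∑ k ∈ Finset.range N, ∑ j ∈ Finset.range k,
            M k (Function.update (fun _ => h0) j
              (d h0 + h0 * h0 + ∑ k' ∈ Finset.range N, M k' (fun _ => h0))) := by
  classical
  set a : ℕ → R := fun _ => h0 with ha
  have haap : ∀ n, a n = h0 := fun n => rfl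
  -- characteristic 2
  have two0 : (2 : R) = 0 := by
    have h := map_ofNat (algebraMap (ZMod 2) R) 2
    rw [← h, show ((2 : ZMod 2)) = 0 from rfl, map_zero]
  have ch2 : ∀ x : R, x + x = 0 := fun x => by rw [← two_mul, two0, zero_mul]
  have d0 : d 0 = 0 := by
    have h := hadd 0 0
    rw [add_zero] at h
    exact (left_eq_add.mp h)
  have dsum : ∀ (s : Finset ℕ) (g : ℕ → R), d (∑ k ∈ s, g k) = ∑ k ∈ s, d (g k) := by
    intro s g
    induction s using Finset.induction with
    | empty => simpa using d0
    | insert _ _ h ih => rw [Finset.sum_insert h, hadd, ih, Finset.sum_insert h]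
  have updzero : ∀ k j, j < k → M k (Function.update a j 0) = 0 := by
    intro k j hj
    have h := (hM k).2 j hj a 0 0
    rw [add_zero] at h
    exact left_eq_add.mp h
  have updadd : ∀ k j, j < k → ∀ x y : R,
      M k (Function.update a j (x + y))
        = M k (Function.update a j x) + M k (Function.update a j y) :=
    fun k j hj x y => (hM k).2 j hj a x y
  have updsum : ∀ k j, j < k → ∀ (s : Finset ℕ) (g : ℕ → R),
      M k (Function.update a j (∑ i ∈ s, g i)) = ∑ i ∈ s, M k (Function.update a j (g i)) := by
    intro k j hj s g
    induction s using Finset.induction with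
    | empty => simpa using updzero k j hj
    | insert _ _ h ih => rw [Finset.sum_insert h, updadd k j hj, ih, Finset.sum_insert h]
  have hshift : ∀ i, Hoch.shift a i = a := fun i => rfl
  have hmerge : ∀ j : ℕ, Hoch.merge a j = Function.update a j (h0 * h0) := by
    intro j; funext n
    simp only [Hoch.merge, Function.update_apply]
    split_ifs <;> first | rfl | (exfalso; omega)
  have hins : ∀ (m p2 : ℕ) (g : (ℕ → R) → R),
      Hoch.ins a m p2 g = Function.update a m (g a) := by
    intro m p2 g; funext n
    simp only [Hoch.ins, Function.update_apply, hshift]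
    split_ifs <;> first | rfl | (exfalso; omega)
  -- evaluate the chain map identity at the constant sequence
  have hchain' : ∀ k : ℕ,
      h0 * M k a + (∑ j ∈ Finset.range k, M k (Function.update a j (h0 * h0))) + M k a * h0
        = ∑ p ∈ Finset.HasAntidiagonal.antidiagonal (k + 2), ∑ m ∈ Finset.range p.1,
            M p.1 (Function.update a m (M p.2 a)) := by
    intro k
    have h := congrFun (hchain k) a
    simp only [Hoch.δH, Hoch.cup1, Finset.sum_apply, hshift, hmerge, hins, haap] at h
    exact h
  set S : R := ∑ k ∈ Finset.range N, M k a with hS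
  -- vanishing lemmas for the pair-indexed sum
  have V1 : ∀ p : ℕ × ℕ, M p.1 = 0 →
      (∑ m ∈ Finset.range p.1, M p.1 (Function.update a m (M p.2 a))) = 0 := by
    intro p hp; simp [hp]
  have V2 : ∀ p : ℕ × ℕ, M p.2 = 0 →
      (∑ m ∈ Finset.range p.1, M p.1 (Function.update a m (M p.2 a))) = 0 := by
    intro p hp
    refine Finset.sum_eq_zero fun m hm => ?_
    rw [hp]
    simpa using updzero p.1 m (Finset.mem_range.mp hm)
  -- sum the chain identity over k ∈ range (2*N+2)
  have Esum :
      ∑ k ∈ Finset.range (2 * N + 2),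
          (h0 * M k a + (∑ j ∈ Finset.range k, M k (Function.update a j (h0 * h0))) + M k a * h0)
        = ∑ k ∈ Finset.range (2 * N + 2), ∑ p ∈ Finset.HasAntidiagonal.antidiagonal (k + 2),
            ∑ m ∈ Finset.range p.1, M p.1 (Function.update a m (M p.2 a)) :=
    Finset.sum_congr rfl fun k _ => hchain' k
  have hNsub : Finset.range N ⊆ Finset.range (2 * N + 2) :=
    Finset.range_subset_range.mpr (by omega)
  have trunc1 : ∑ k ∈ Finset.range (2 * N + 2), M k a = S := by
    rw [hS]
    refine (Finset.sum_subset hNsub fun k _ hk => ?_).symm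
    rw [hMN k (by simpa using hk)]; rfl
  have trunc2 :
      ∑ k ∈ Finset.range (2 * N + 2), ∑ j ∈ Finset.range k, M k (Function.update a j (h0 * h0))
        = ∑ k ∈ Finset.range N, ∑ j ∈ Finset.range k, M k (Function.update a j (h0 * h0)) := by
    refine (Finset.sum_subset hNsub fun k _ hk => ?_).symm
    rw [hMN k (by simpa using hk)]
    simp
  -- reindex the RHS double sum as a sum over pairs
  have hdisj : (↑(Finset.range (2 * N + 2)) : Set ℕ).PairwiseDisjoint
      (fun k => Finset.HasAntidiagonal.antidiagonal (k + 2) : ℕ → Finset (ℕ × ℕ)) := by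
    intro i _ j _ hij
    simp only [Function.onFun, Finset.disjoint_left]
    intro p hp hq
    rw [Finset.HasAntidiagonal.mem_antidiagonal] at hp hq
    omega
  have hbi :
      ∑ k ∈ Finset.range (2 * N + 2), ∑ p ∈ Finset.HasAntidiagonal.antidiagonal (k + 2),
          ∑ m ∈ Finset.range p.1, M p.1 (Function.update a m (M p.2 a))
        = ∑ p ∈ (Finset.range (2 * N + 2)).biUnion (fun k => Finset.HasAntidiagonal.antidiagonal (k + 2)),
            ∑ m ∈ Finset.range p.1, M p.1 (Function.update a m (M p.2 a)) :=
    (Finset.sum_biUnion hdisj).symm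
  set P' : Finset (ℕ × ℕ) :=
    (Finset.range N ×ˢ Finset.range N).filter (fun p => 2 ≤ p.1 + p.2) with hP'
  have hsub1 : P' ⊆ (Finset.range (2 * N + 2)).biUnion (fun k => Finset.HasAntidiagonal.antidiagonal (k + 2)) := by
    intro p hp
    rw [hP', Finset.mem_filter, Finset.mem_product, Finset.mem_range, Finset.mem_range] at hp
    rw [Finset.mem_biUnion]
    refine ⟨p.1 + p.2 - 2, Finset.mem_range.mpr (by omega), Finset.HasAntidiagonal.mem_antidiagonal.mpr (by omega)⟩
  have e_bi :
      ∑ p ∈ (Finset.range (2 * N + 2)).biUnion (fun k => Finset.HasAntidiagonal.antidiagonal (k + 2)),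
          ∑ m ∈ Finset.range p.1, M p.1 (Function.update a m (M p.2 a))
        = ∑ p ∈ P', ∑ m ∈ Finset.range p.1, M p.1 (Function.update a m (M p.2 a)) := by
    refine (Finset.sum_subset hsub1 fun p hpB hpP' => ?_).symm
    rw [Finset.mem_biUnion] at hpB
    obtain ⟨k, -, hk⟩ := hpB
    rw [Finset.HasAntidiagonal.mem_antidiagonal] at hk
    by_cases h1 : N ≤ p.1
    · exact V1 p (hMN p.1 h1)
    by_cases h2 : N ≤ p.2
    · exact V2 p (hMN p.2 h2)
    exact absurd (Finset.mem_filter.mpr ⟨Finset.mem_product.mpr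
      ⟨Finset.mem_range.mpr (by omega), Finset.mem_range.mpr (by omega)⟩, by omega⟩) hpP'
  have e_pr :
      ∑ p ∈ Finset.range N ×ˢ Finset.range N,
          ∑ m ∈ Finset.range p.1, M p.1 (Function.update a m (M p.2 a))
        = ∑ p ∈ P', ∑ m ∈ Finset.range p.1, M p.1 (Function.update a m (M p.2 a)) := by
    refine (Finset.sum_subset (Finset.filter_subset _ _) fun p hp hnp => ?_).symm
    have : p.1 + p.2 < 2 := by
      by_contra hc
      exact hnp (Finset.mem_filter.mpr ⟨hp, by omega⟩)
    exact V1 p (hM3 p.1 (by omega))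
  have E1 : h0 * S + (∑ k ∈ Finset.range N, ∑ j ∈ Finset.range k,
        M k (Function.update a j (h0 * h0))) + S * h0
      = ∑ k ∈ Finset.range N, ∑ k' ∈ Finset.range N,
          ∑ m ∈ Finset.range k, M k (Function.update a m (M k' a)) := by
    have hL :
        ∑ k ∈ Finset.range (2 * N + 2),
            (h0 * M k a + (∑ j ∈ Finset.range k, M k (Function.update a j (h0 * h0)))
              + M k a * h0)
          = h0 * S + (∑ k ∈ Finset.range N, ∑ j ∈ Finset.range k,
              M k (Function.update a j (h0 * h0))) + S * h0 := by
      rw [Finset.sum_add_distrib, Finset.sum_add_distrib, ← Finset.mul_sum, ← Finset.sum_mul,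
        trunc1, trunc2]
    rw [hL] at Esum
    rw [Esum, hbi, e_bi, ← e_pr, Finset.sum_product]
  -- expand the curvature in each slot
  have expand : ∀ k, ∀ j, j < k →
      M k (Function.update a j (d h0 + h0 * h0 + S))
        = M k (Function.update a j (d h0)) + M k (Function.update a j (h0 * h0))
          + ∑ k' ∈ Finset.range N, M k (Function.update a j (M k' a)) := by
    intro k j hj
    rw [updadd k j hj, updadd k j hj, hS, updsum k j hj]
  -- main computation
  rw [show (fun _ => h0 : ℕ → R) = a from rfl] at *
  calc
    d (d h0 + h0 * h0 + S)
        = d h0 * h0 + h0 * d h0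
          + ∑ k ∈ Finset.range N, ∑ j ∈ Finset.range k, M k (Function.update a j (d h0)) := by
          rw [hadd, hadd, hdd, hleib, hS, dsum, zero_add]
          congr 1
          refine Finset.sum_congr rfl fun k _ => ?_
          rw [hLeib k a]
    _ = h0 * (d h0 + h0 * h0 + S) + (d h0 + h0 * h0 + S) * h0
          + ∑ k ∈ Finset.range N, ∑ j ∈ Finset.range k,
              M k (Function.update a j (d h0 + h0 * h0 + S)) := by
          have hT :
              ∑ k ∈ Finset.range N, ∑ j ∈ Finset.range k,
                  M k (Function.update a j (d h0 + h0 * h0 + S))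
                = (∑ k ∈ Finset.range N, ∑ j ∈ Finset.range k,
                      M k (Function.update a j (d h0)))
                  + (∑ k ∈ Finset.range N, ∑ j ∈ Finset.range k,
                      M k (Function.update a j (h0 * h0)))
                  + ∑ k ∈ Finset.range N, ∑ j ∈ Finset.range k,
                      ∑ k' ∈ Finset.range N, M k (Function.update a j (M k' a)) := by
            rw [← Finset.sum_add_distrib, ← Finset.sum_add_distrib]
            refine Finset.sum_congr rfl fun k _ => ?_
            rw [← Finset.sum_add_distrib, ← Finset.sum_add_distrib]
            exact Finset.sum_congr rfl fun j hj => expand k j (Finset.mem_range.mp hj)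
          have hG :
              ∑ k ∈ Finset.range N, ∑ j ∈ Finset.range k,
                  ∑ k' ∈ Finset.range N, M k (Function.update a j (M k' a))
                = ∑ k ∈ Finset.range N, ∑ k' ∈ Finset.range N,
                    ∑ m ∈ Finset.range k, M k (Function.update a m (M k' a)) :=
            Finset.sum_congr rfl fun k _ => Finset.sum_comm
          set D : R := ∑ k ∈ Finset.range N, ∑ j ∈ Finset.range k,
              M k (Function.update a j (d h0)) with hD
          set C : R := ∑ k ∈ Finset.range N, ∑ j ∈ Finset.range k,
              M k (Function.update a j (h0 * h0)) with hC
          set G : R := ∑ k ∈ Finset.range N, ∑ k' ∈ Finset.range N,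
              ∑ m ∈ Finset.range k, M k (Function.update a m (M k' a)) with hGdef
          rw [hT, hG]
          have e2 : h0 * S + S * h0 + C + G = 0 := by
            have : h0 * S + S * h0 + C + G = (h0 * S + C + S * h0) + G := by abel
            rw [this, E1, ch2]
          have e1 : h0 * (h0 * h0) + h0 * (h0 * h0) = 0 := ch2 _
          have key : h0 * (d h0 + h0 * h0 + S) + (d h0 + h0 * h0 + S) * h0 + (D + C + G)
              = (d h0 * h0 + h0 * d h0 + D)
                + ((h0 * (h0 * h0) + h0 * (h0 * h0)) + (h0 * S + S * h0 + C + G)) := by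
            rw [mul_add, mul_add, add_mul, add_mul]
            rw [show (h0 * h0) * h0 = h0 * (h0 * h0) from mul_assoc h0 h0 h0]
            abel
          rw [key, e1, e2, add_zero, add_zero]
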